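/- Let R be a commutative reduced ring with unity and I a proper ideal of R. Then I is a z⁰-ideal if and only if for every a ∈ I, Ann(Ann(a)) ⊆ I. -/

import Mathlib

/-- In a reduced ring, every element of a minimal prime is killed by
an element outside the prime. -/
lemma aux_min {R : Type*} [CommRing R] [IsReduced R] {q : Ideal R}
    (hq : q ∈ minimalPrimes R) {x : R} (hx : x ∈ q) : ∃ r ∉ q, r * x = 0 := by
  haveI : q.IsPrime := hq.1.1
  have h : IsNilpotent (algebraMap R (Localization q.primeCompl) x) := by
    rw [← mem_nilradical, nilradical_eq_sInf, Ideal.mem_sInf]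
    intro J hJ
    have hs := IsLocalization.subsingleton_primeSpectrum_of_mem_minimalPrimes q hq
      (Localization.AtPrime q)
    have hJ' : J = IsLocalRing.maximalIdeal (Localization.AtPrime q) :=
      congrArg PrimeSpectrum.asIdeal (hs.elim ⟨J, hJ⟩ ⟨IsLocalRing.maximalIdeal _, (IsLocalRing.maximalIdeal.isMaximal _).isPrime⟩)
    rw [hJ']
    exact (IsLocalization.AtPrime.to_map_mem_maximal_iff _ q x).2 hx
  obtain ⟨n, hn⟩ := h
  rw [← map_pow] at hn
  obtain ⟨⟨s, hs⟩, hsx⟩ := (IsLocalization.map_eq_zero_iff q.primeCompl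
    (Localization q.primeCompl) (x ^ n)).1 hn
  refine ⟨s, hs, ?_⟩
  have hsx' : s * x ^ n = 0 := hsx
  have : (s * x) ^ (n + 1) = 0 := by
    rw [mul_pow]
    calc s ^ (n+1) * x ^ (n+1) = s ^ n * x * (s * x ^ n) := by ring
    _ = 0 := by rw [hsx', mul_zero]
  exact IsNilpotent.eq_zero ⟨n+1, this⟩

/-- A proper ideal `I` of a commutative reduced ring is a z⁰-ideal iff
for every `a ∈ I`, `Ann(Ann(a)) ⊆ I`. -/
theorem z0Ideal_iff_annAnn_subset
    {R : Type*} [CommRing R] [IsReduced R] (I : Ideal R) (hI : I ≠ ⊤) :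
    (∀ a ∈ I, ∀ b : R, (∀ Q ∈ minimalPrimes R, a ∈ Q → b ∈ Q) → b ∈ I) ↔
      (∀ a ∈ I, {b : R | ∀ r : R, r * a = 0 → r * b = 0} ⊆ ↑I) := by
  constructor
  · intro h a ha b hb
    refine h a ha b ?_
    intro Q hQ haQ
    haveI : Q.IsPrime := hQ.1.1
    obtain ⟨r, hr, hra⟩ := aux_min hQ haQ
    have hrb : r * b = 0 := hb r hra
    rcases this.mem_or_mem (show r * b ∈ Q by rw [hrb]; exact Q.zero_mem) with h' | h'
    · exact absurd h' hr
    · exact h'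
  · intro h a ha b hb
    refine h a ha ?_
    intro r hra
    -- show r * b = 0 by showing it lies in every minimal prime
    have hmem : r * b ∈ sInf (minimalPrimes R) := by
      rw [Ideal.mem_sInf]
      intro Q hQ
      · 
        haveI : Q.IsPrime := hQ.1.1
        by_cases haQ : a ∈ Q
        · exact Q.mul_mem_left r (hb Q hQ haQ)
        · have hr : r ∈ Q := by
            rcases this.mem_or_mem (show r * a ∈ Q by rw [hra]; exact Q.zero_mem) with h' | h'
            · exact h'
            · exact absurd h' haQ
          exact Q.mul_mem_right b hr
    have heq : sInf (minimalPrimes R) = (⊥ : Ideal R) := by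
      have h1 : sInf ((⊥ : Ideal R).minimalPrimes) = (⊥ : Ideal R).radical :=
        Ideal.sInf_minimalPrimes
      have h2 : (⊥ : Ideal R).radical = ⊥ := by
        simpa [nilradical] using (nilradical_eq_zero R)
      rw [minimalPrimes, h1, h2]
    rw [heq] at hmem
    exact hmem
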